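/- For every t ∈ ℝ and every r > 0, setting T = arctan(t+r) + arctan(t−r) and R = arctan(t+r) − arctan(t−r), one has cos T + cos R > 0, sin T = t·(cos T + cos R), and sin R = r·(cos T + cos R). (Equivalently: the map (T,X) ↦ (sin T, X⃗)/(cos T + X₀), where X = (cos R, ω sin R) with ω = x/|x|, is a left inverse of the Penrose transformation (t,x) ↦ (T, cos R, ω sin R).) -/
import Mathlib

open Real

/-- **The inverse Penrose transformation is a left inverse (formula (2.5)).**
For `T = arctan(t+r) + arctan(t−r)` and `R = arctan(t+r) − arctan(t−r)` one has
`cos T + cos R > 0`, `sin T = t (cos T + cos R)` and `sin R = r (cos T + cos R)`. -/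
theorem penrose_left_inverse :
    ∀ (t r : ℝ), 0 < r →
      0 < Real.cos (Real.arctan (t + r) + Real.arctan (t - r)) +
          Real.cos (Real.arctan (t + r) - Real.arctan (t - r)) ∧
      Real.sin (Real.arctan (t + r) + Real.arctan (t - r)) =
        t * (Real.cos (Real.arctan (t + r) + Real.arctan (t - r)) +
          Real.cos (Real.arctan (t + r) - Real.arctan (t - r))) ∧
      Real.sin (Real.arctan (t + r) - Real.arctan (t - r)) =
        r * (Real.cos (Real.arctan (t + r) + Real.arctan (t - r)) +
          Real.cos (Real.arctan (t + r) - Real.arctan (t - r))) := by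
  intro t r hr
  set a := Real.arctan (t + r) with ha
  set b := Real.arctan (t - r) with hb
  have hca : 0 < Real.cos a := Real.cos_arctan_pos _
  have hcb : 0 < Real.cos b := Real.cos_arctan_pos _
  have hsa : Real.sin a = (t + r) * Real.cos a := by
    have := Real.tan_arctan (t + r)
    rw [Real.tan_eq_sin_div_cos] at this
    field_simp at this
    linarith [this]
  have hsb : Real.sin b = (t - r) * Real.cos b := by
    have := Real.tan_arctan (t - r)
    rw [Real.tan_eq_sin_div_cos] at this
    field_simp at this
    linarith [this]
  rw [Real.cos_add, Real.cos_sub, Real.sin_add, Real.sin_sub]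
  refine ⟨by nlinarith, by nlinarith [mul_pos hca hcb], by nlinarith [mul_pos hca hcb]⟩
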